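/- Let d ≥ 1 and λ ∈ [−1,1/d). Every continuous λ-curve γ : I → ℝ^d with bounded image has finite length: ℓ(γ) < ∞. -/

import Mathlib

open scoped RealInnerProductSpace
open Set


lemma cap_lemma (d : ℕ) (lam : ℝ) (hlam₁ : -1 ≤ lam) (hlamd : (d : ℝ) * lam < 1)
    (W : Set (EuclideanSpace ℝ (Fin d))) (hWfin : W.Finite) (hWne : W.Nonempty)
    (hunit : ∀ w ∈ W, ‖w‖ = 1)
    (hpair : ∀ w ∈ W, ∀ w' ∈ W, -lam ≤ ⟪w, w'⟫) :
    ∃ z : EuclideanSpace ℝ (Fin d), ‖z‖ = 1 ∧ ∀ w ∈ W,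
      Real.sqrt ((1 - d * lam) / (d + 1)) ≤ ⟪z, w⟫ := by
  classical
  set ε2 : ℝ := (1 - d * lam) / (d + 1) with hε2
  have hε2pos : 0 < ε2 := by
    apply div_pos (by linarith) (by positivity)
  set K : Set (EuclideanSpace ℝ (Fin d)) := convexHull ℝ W with hK
  have hKcomp : IsCompact K := hWfin.isCompact_convexHull ℝ
  have hKconv : Convex ℝ K := convex_convexHull ℝ W
  have hKne : K.Nonempty := hWne.mono (subset_convexHull ℝ W)
  obtain ⟨v, hvK, hvmin⟩ := hKcomp.exists_isMinOn hKne continuous_norm.continuousOn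
  -- first order condition
  have hfo : ∀ w ∈ K, ‖v‖ ^ 2 ≤ ⟪v, w⟫ := by
    intro w hw
    by_contra hcon
    push_neg at hcon
    have hs : ⟪v, w - v⟫ < 0 := by
      rw [inner_sub_right]
      have : ⟪v, v⟫ = ‖v‖ ^ 2 := real_inner_self_eq_norm_sq v
      linarith
    have hwv : w - v ≠ 0 := by
      intro h0
      rw [h0, inner_zero_right] at hs; linarith
    have hc : 0 < ‖w - v‖ ^ 2 := pow_pos (norm_pos_iff.mpr hwv) 2
    set c : ℝ := ‖w - v‖ ^ 2 with hcd
    set t : ℝ := min 1 (-⟪v, w - v⟫ / c) with htd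
    have ht0 : 0 < t := lt_min one_pos (div_pos (by linarith) hc)
    have ht1 : t ≤ 1 := min_le_left _ _
    have htc : t * c ≤ -⟪v, w - v⟫ := by
      have h := min_le_right 1 (-⟪v, w - v⟫ / c)
      calc t * c ≤ (-⟪v, w - v⟫ / c) * c := by nlinarith
        _ = -⟪v, w - v⟫ := by field_simp
    have hmem : v + t • (w - v) ∈ K := by
      have h2 : (1 - t) • v + t • w ∈ K := hKconv hvK hw (by linarith) (le_of_lt ht0) (by ring)
      have heq : v + t • (w - v) = (1 - t) • v + t • w := by
        rw [smul_sub, sub_smul, one_smul]; abel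
      rwa [heq]
    have hle : ‖v‖ ≤ ‖v + t • (w - v)‖ := hvmin hmem
    have hexp : ‖v + t • (w - v)‖ ^ 2 = ‖v‖ ^ 2 + 2 * (t * ⟪v, w - v⟫) + t ^ 2 * c := by
      rw [norm_add_sq_real, real_inner_smul_right, norm_smul]
      rw [hcd, mul_pow]
      simp [abs_of_pos ht0]
    have hsq : ‖v‖ ^ 2 ≤ ‖v + t • (w - v)‖ ^ 2 := by
      apply sq_le_sq' _ hle
      have := norm_nonneg (v + t • (w - v)); linarith [norm_nonneg v]
    nlinarith [hs, ht0, htc]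
  -- lower bound on ‖v‖²
  obtain ⟨ι, hfin, z, w, hzr, hai, hwpos, hwsum, hwrep⟩ :=
    eq_pos_convex_span_of_mem_convexHull hvK
  letI := hfin
  have hιne : Nonempty ι := by
    by_contra hemp
    rw [not_nonempty_iff] at hemp
    rw [Finset.univ_eq_empty, Finset.sum_empty] at hwsum
    exact one_ne_zero hwsum.symm
  have hcard : (Fintype.card ι : ℝ) ≤ (d : ℝ) + 1 := by
    have h1 : Fintype.card ι ≤ Module.finrank ℝ (vectorSpan ℝ (Set.range z)) + 1 :=
      hai.card_le_finrank_succ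
    have h2 : Module.finrank ℝ (vectorSpan ℝ (Set.range z)) ≤
        Module.finrank ℝ (EuclideanSpace ℝ (Fin d)) := Submodule.finrank_le _
    have h3 : Module.finrank ℝ (EuclideanSpace ℝ (Fin d)) = d := finrank_euclideanSpace_fin
    have : Fintype.card ι ≤ d + 1 := by omega
    exact_mod_cast this
  have hnormv : ‖v‖ ^ 2 = ∑ i, ∑ j, w i * (w j * ⟪z i, z j⟫) := by
    rw [← real_inner_self_eq_norm_sq, ← hwrep, sum_inner]
    refine Finset.sum_congr rfl fun i _ => ?_
    rw [real_inner_smul_left, inner_sum, Finset.mul_sum]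
    refine Finset.sum_congr rfl fun j _ => ?_
    rw [real_inner_smul_right]
  have hkey : ∀ i j, -lam * (w i * w j) + (if i = j then (1 + lam) * (w i) ^ 2 else 0)
      ≤ w i * (w j * ⟪z i, z j⟫) := by
    intro i j
    by_cases hij : i = j
    · subst hij
      rw [if_pos rfl]
      have hzz : ⟪z i, z i⟫ = 1 := by
        rw [real_inner_self_eq_norm_sq, hunit (z i) (hzr (Set.mem_range_self i))]; norm_num
      rw [hzz]; nlinarith [sq_nonneg (w i)]
    · rw [if_neg hij]
      have hin : -lam ≤ ⟪z i, z j⟫ :=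
        hpair _ (hzr (Set.mem_range_self i)) _ (hzr (Set.mem_range_self j))
      nlinarith [mul_nonneg (mul_nonneg (hwpos i).le (hwpos j).le)
        (by linarith : (0:ℝ) ≤ ⟪z i, z j⟫ + lam)]
  have hsumsqnn : (0:ℝ) ≤ ∑ i, (w i) ^ 2 := by positivity
  have hsum2 : 1 ≤ (∑ i, (w i) ^ 2) * ((d : ℝ) + 1) := by
    have hcs := sq_sum_le_card_mul_sum_sq (s := (Finset.univ : Finset ι)) (f := w)
    rw [Finset.card_univ, hwsum] at hcs
    nlinarith [mul_nonneg (sub_nonneg.mpr hcard) hsumsqnn]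
  have h2 : ∑ i, ∑ j, (-lam * (w i * w j) + (if i = j then (1 + lam) * (w i) ^ 2 else 0))
      = -lam + (1 + lam) * ∑ i, (w i) ^ 2 := by
    have hrow : ∀ i : ι, ∑ j, (-lam * (w i * w j) + (if i = j then (1 + lam) * (w i) ^ 2 else 0))
        = -lam * w i + (1 + lam) * (w i) ^ 2 := by
      intro i
      rw [Finset.sum_add_distrib, Finset.sum_ite_eq (Finset.univ : Finset ι) i
        (fun _ => (1 + lam) * (w i) ^ 2)]
      simp only [Finset.mem_univ, if_pos]
      have : ∑ j, -lam * (w i * w j) = -lam * w i * ∑ j, w j := by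
        rw [Finset.mul_sum]; exact Finset.sum_congr rfl fun j _ => by ring
      rw [this, hwsum]; ring
    rw [Finset.sum_congr rfl fun i _ => hrow i, Finset.sum_add_distrib]
    have : ∑ i, -lam * w i = -lam * ∑ i, w i := by
      rw [Finset.mul_sum]
    rw [this, hwsum, ← Finset.mul_sum]
    ring
  have hlb : ε2 ≤ ‖v‖ ^ 2 := by
    have h1 : ∑ i, ∑ j, (-lam * (w i * w j) + (if i = j then (1 + lam) * (w i) ^ 2 else 0))
        ≤ ∑ i, ∑ j, w i * (w j * ⟪z i, z j⟫) :=
      Finset.sum_le_sum fun i _ => Finset.sum_le_sum fun j _ => hkey i j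
    rw [h2] at h1
    rw [hnormv, hε2, div_le_iff₀ (by positivity : (0:ℝ) < (d:ℝ) + 1)]
    have h1lam : (0:ℝ) ≤ 1 + lam := by linarith
    nlinarith [hsum2, mul_le_mul_of_nonneg_left hsum2 h1lam]
  have hvpos : 0 < ‖v‖ := by
    nlinarith [norm_nonneg v, lt_of_lt_of_le hε2pos hlb]
  refine ⟨‖v‖⁻¹ • v, ?_, ?_⟩
  · rw [norm_smul, norm_inv, norm_norm, inv_mul_cancel₀ hvpos.ne']
  · intro u huW
    have h1 : ‖v‖ ^ 2 ≤ ⟪v, u⟫ := hfo u (subset_convexHull ℝ W huW)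
    rw [real_inner_smul_left]
    have hsqle : Real.sqrt ε2 ≤ ‖v‖ := by
      rw [show ‖v‖ = Real.sqrt (‖v‖ ^ 2) by rw [Real.sqrt_sq (norm_nonneg v)]]
      exact Real.sqrt_le_sqrt hlb
    calc Real.sqrt ε2 ≤ ‖v‖ := hsqle
      _ = ‖v‖⁻¹ * ‖v‖ ^ 2 := by field_simp [hvpos.ne']
      _ ≤ ‖v‖⁻¹ * ⟪v, u⟫ := by
          apply mul_le_mul_of_nonneg_left h1 (by positivity)


lemma net_exists (d : ℕ) (δ : ℝ) (hδ : 0 < δ) :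
    ∃ E : Finset (EuclideanSpace ℝ (Fin d)), (∀ e ∈ E, ‖e‖ = 1) ∧
      ∀ z : EuclideanSpace ℝ (Fin d), ‖z‖ = 1 → ∃ e ∈ E, ‖z - e‖ ≤ δ := by
  obtain ⟨t, ht, hcov⟩ := (isCompact_sphere (0 : EuclideanSpace ℝ (Fin d)) 1).elim_nhds_subcover
    (fun x => Metric.ball x δ) (fun x _ => Metric.ball_mem_nhds x hδ)
  refine ⟨t, ?_, ?_⟩
  · intro e he
    simpa [mem_sphere_zero_iff_norm] using ht e he
  · intro z hz
    have hzs : z ∈ Metric.sphere (0 : EuclideanSpace ℝ (Fin d)) 1 := by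
      simpa [mem_sphere_zero_iff_norm] using hz
    have := hcov hzs
    simp only [Set.mem_iUnion, exists_prop] at this
    obtain ⟨e, he, hball⟩ := this
    exact ⟨e, he, by rw [← dist_eq_norm]; exact (Metric.mem_ball.mp hball).le⟩

lemma core_sum_bound (d : ℕ) (lam : ℝ) (hlam₁ : -1 ≤ lam) (hlamd : (d : ℝ) * lam < 1)
    (hlam1 : lam < 1)
    (E : Finset (EuclideanSpace ℝ (Fin d)))
    (hEunit : ∀ e ∈ E, ‖e‖ = 1)
    (hEnet : ∀ z : EuclideanSpace ℝ (Fin d), ‖z‖ = 1 →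
      ∃ e ∈ E, ‖z - e‖ ≤ Real.sqrt ((1 - d * lam) / (d + 1)) / 2)
    (D : ℝ) (n : ℕ) (x : ℕ → EuclideanSpace ℝ (Fin d))
    (hx : ∀ i j k : ℕ, i ≤ j → j ≤ k → ‖x i - x j‖ ≤ ‖x i - x k‖ + lam * ‖x j - x k‖)
    (hxD : ∀ i, ‖x i - x 0‖ ≤ D) :
    (Real.sqrt ((1 - d * lam) / (d + 1)) / 2 * ((1 - lam) / 2)) *
      ∑ k ∈ Finset.range n, ‖x (k + 1) - x k‖ ≤ E.card * D := by
  classical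
  set ε : ℝ := Real.sqrt ((1 - d * lam) / (d + 1)) with hεdef
  have hεpos : 0 < ε := Real.sqrt_pos.mpr (div_pos (by linarith) (by positivity))
  set c : ℝ := ε / 2 * ((1 - lam) / 2) with hcdef
  have hcpos : 0 < c := by
    rw [hcdef]
    apply mul_pos (by positivity) (by linarith)
  set M : EuclideanSpace ℝ (Fin d) → ℕ → ℝ :=
    fun e k => (Finset.range (k + 1)).sup' Finset.nonempty_range_add_one (fun i => ⟪x i, e⟫)
    with hMdef
  have hMmono : ∀ e k, M e k ≤ M e (k + 1) := by
    intro e k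
    simp only [hMdef]
    apply Finset.sup'_le
    intro i hi
    exact Finset.le_sup' (fun i => ⟪x i, e⟫)
      (Finset.mem_range.mpr (by have := Finset.mem_range.mp hi; omega))
  -- key chord estimate
  have hkey : ∀ k : ℕ, c * ‖x (k + 1) - x k‖ ≤ ∑ e ∈ E, (M e (k + 1) - M e k) := by
    intro k
    by_cases hzero : x (k + 1) = x k
    · rw [hzero, sub_self, norm_zero, mul_zero]
      exact Finset.sum_nonneg fun e _ => by linarith [hMmono e k]
    have hLpos : 0 < ‖x (k + 1) - x k‖ := norm_pos_iff.mpr (sub_ne_zero.mpr hzero)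
    set L : ℝ := ‖x (k + 1) - x k‖ with hLdef
    have hfar : ∀ i, i ≤ k → (1 - lam) / 2 * L ≤ ‖x (k + 1) - x i‖ := by
      intro i hik
      have h1 := hx i k (k + 1) hik (Nat.le_succ k)
      have h2 : ‖x k - x (k + 1)‖ ≤ ‖x k - x i‖ + ‖x i - x (k + 1)‖ := by
        simpa [dist_eq_norm] using dist_triangle (x k) (x i) (x (k + 1))
      have e1 : ‖x k - x (k + 1)‖ = L := norm_sub_rev _ _
      have e2 : ‖x i - x (k + 1)‖ = ‖x (k + 1) - x i‖ := norm_sub_rev _ _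
      have e3 : ‖x i - x k‖ = ‖x k - x i‖ := norm_sub_rev _ _
      rw [e1, e2] at h2
      rw [e3, e2, e1] at h1
      linarith
    have hApos : ∀ i, i ≤ k → 0 < ‖x (k + 1) - x i‖ := by
      intro i hik
      have h0 : 0 < (1 - lam) / 2 * L := by nlinarith
      linarith [hfar i hik]
    set f : ℕ → EuclideanSpace ℝ (Fin d) :=
      fun i => ‖x (k + 1) - x i‖⁻¹ • (x (k + 1) - x i) with hfdef
    set W : Finset (EuclideanSpace ℝ (Fin d)) := (Finset.range (k + 1)).image f with hWdef
    have haux : ∀ i j, i ≤ j → j ≤ k → -lam ≤ ⟪f j, f i⟫ := by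
      intro i j hij hjk
      have hik : i ≤ k := le_trans hij hjk
      have hA := hApos i hik
      have hB := hApos j hjk
      have h1 := hx i j (k + 1) hij (by omega)
      have e2 : ‖x i - x (k + 1)‖ = ‖x (k + 1) - x i‖ := norm_sub_rev _ _
      have e3 : ‖x j - x (k + 1)‖ = ‖x (k + 1) - x j‖ := norm_sub_rev _ _
      have e4 : ‖x i - x j‖ = ‖x j - x i‖ := norm_sub_rev _ _
      rw [e2, e3, e4] at h1
      have hexp : ⟪x (k + 1) - x j, x (k + 1) - x i⟫
          = ⟪x (k + 1) - x i, x (k + 1) - x i⟫ - ⟪x j - x i, x (k + 1) - x i⟫ := by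
        rw [← inner_sub_left]
        congr 1
        abel
      have hcs := real_inner_le_norm (x j - x i) (x (k + 1) - x i)
      have hAA : ⟪x (k + 1) - x i, x (k + 1) - x i⟫ = ‖x (k + 1) - x i‖ ^ 2 :=
        real_inner_self_eq_norm_sq _
      have h6 : ⟪x j - x i, x (k + 1) - x i⟫
          ≤ (‖x (k + 1) - x i‖ + lam * ‖x (k + 1) - x j‖) * ‖x (k + 1) - x i‖ :=
        le_trans hcs (mul_le_mul_of_nonneg_right h1 (norm_nonneg _))
      have hBA : -lam * (‖x (k + 1) - x j‖ * ‖x (k + 1) - x i‖)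
          ≤ ⟪x (k + 1) - x j, x (k + 1) - x i⟫ := by
        rw [hexp, hAA]; nlinarith [h6]
      have h7 : -lam ≤ ⟪x (k + 1) - x j, x (k + 1) - x i⟫
          / (‖x (k + 1) - x j‖ * ‖x (k + 1) - x i‖) := by
        rw [le_div_iff₀ (by positivity)]
        linarith [hBA]
      have hfji : ⟪f j, f i⟫ = ‖x (k + 1) - x j‖⁻¹
          * (‖x (k + 1) - x i‖⁻¹ * ⟪x (k + 1) - x j, x (k + 1) - x i⟫) := by
        simp only [hfdef]
        rw [real_inner_smul_left, real_inner_smul_right]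
      have heqd : ⟪x (k + 1) - x j, x (k + 1) - x i⟫
          / (‖x (k + 1) - x j‖ * ‖x (k + 1) - x i‖)
          = ‖x (k + 1) - x j‖⁻¹ * (‖x (k + 1) - x i‖⁻¹
            * ⟪x (k + 1) - x j, x (k + 1) - x i⟫) := by
        rw [div_eq_mul_inv, mul_inv]; ring
      rw [hfji, ← heqd]
      exact h7
    have hWunit : ∀ w ∈ (↑W : Set (EuclideanSpace ℝ (Fin d))), ‖w‖ = 1 := by
      intro w hw
      simp only [hWdef, Finset.coe_image, Set.mem_image, Finset.mem_coe,
        Finset.mem_range] at hw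
      obtain ⟨i, hi, rfl⟩ := hw
      have hA := hApos i (by omega)
      simp only [hfdef]
      rw [norm_smul, norm_inv, norm_norm, inv_mul_cancel₀ hA.ne']
    have hWpair : ∀ w ∈ (↑W : Set (EuclideanSpace ℝ (Fin d))),
        ∀ w' ∈ (↑W : Set (EuclideanSpace ℝ (Fin d))), -lam ≤ ⟪w, w'⟫ := by
      intro w hw w' hw'
      simp only [hWdef, Finset.coe_image, Set.mem_image, Finset.mem_coe,
        Finset.mem_range] at hw hw'
      obtain ⟨i, hi, rfl⟩ := hw
      obtain ⟨j, hj, rfl⟩ := hw'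
      rcases le_total i j with h | h
      · rw [real_inner_comm]
        exact haux i j h (by omega)
      · exact haux j i h (by omega)
    have hWne : (↑W : Set (EuclideanSpace ℝ (Fin d))).Nonempty :=
      ⟨f k, by
        simp only [hWdef, Finset.coe_image, Set.mem_image, Finset.mem_coe, Finset.mem_range]
        exact ⟨k, by omega, rfl⟩⟩
    obtain ⟨z, hz1, hzW⟩ := cap_lemma d lam hlam₁ hlamd (↑W) W.finite_toSet hWne hWunit hWpair
    obtain ⟨e, heE, hze⟩ := hEnet z hz1
    have hproj : ∀ i, i ≤ k → ⟪x i, e⟫ + c * L ≤ ⟪x (k + 1), e⟫ := by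
      intro i hik
      have hA := hApos i hik
      have hfiW : f i ∈ (↑W : Set (EuclideanSpace ℝ (Fin d))) := by
        simp only [hWdef, Finset.coe_image, Set.mem_image, Finset.mem_coe, Finset.mem_range]
        exact ⟨i, by omega, rfl⟩
      have hzf : ε ≤ ⟪z, f i⟫ := hzW (f i) hfiW
      have hzA : ε * ‖x (k + 1) - x i‖ ≤ ⟪z, x (k + 1) - x i⟫ := by
        have hs : ⟪z, f i⟫ = ‖x (k + 1) - x i‖⁻¹ * ⟪z, x (k + 1) - x i⟫ := by
          simp only [hfdef]
          rw [real_inner_smul_right]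
        rw [hs] at hzf
        have h := mul_le_mul_of_nonneg_left hzf hA.le
        rw [← mul_assoc, mul_inv_cancel₀ hA.ne', one_mul] at h
        nlinarith [h]
      have hze' : ⟪z - e, x (k + 1) - x i⟫ ≤ ε / 2 * ‖x (k + 1) - x i‖ :=
        le_trans (real_inner_le_norm _ _) (mul_le_mul_of_nonneg_right hze (norm_nonneg _))
      have hsplit : ⟪e, x (k + 1) - x i⟫
          = ⟪z, x (k + 1) - x i⟫ - ⟪z - e, x (k + 1) - x i⟫ := by
        rw [inner_sub_left]; ring
      have h8 : ε / 2 * ‖x (k + 1) - x i‖ ≤ ⟪e, x (k + 1) - x i⟫ := by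
        rw [hsplit]; linarith
      have h9 : c * L ≤ ε / 2 * ‖x (k + 1) - x i‖ := by
        rw [hcdef]
        nlinarith [mul_le_mul_of_nonneg_left (hfar i hik) (by positivity : (0:ℝ) ≤ ε / 2)]
      have h10 : ⟪e, x (k + 1) - x i⟫ = ⟪x (k + 1), e⟫ - ⟪x i, e⟫ := by
        rw [real_inner_comm, inner_sub_left]
      linarith
    have hMe : M e k + c * L ≤ M e (k + 1) := by
      have hub : ⟪x (k + 1), e⟫ ≤ M e (k + 1) := by
        simp only [hMdef]
        exact Finset.le_sup' (fun i => ⟪x i, e⟫)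
          (Finset.mem_range.mpr (by omega))
      have hlb : M e k ≤ ⟪x (k + 1), e⟫ - c * L := by
        simp only [hMdef]
        apply Finset.sup'_le
        intro i hi
        have hik : i ≤ k := by
          have := Finset.mem_range.mp hi; omega
        linarith [hproj i hik]
      linarith
    calc c * L ≤ M e (k + 1) - M e k := by linarith
      _ ≤ ∑ e' ∈ E, (M e' (k + 1) - M e' k) :=
        Finset.single_le_sum (f := fun e' => M e' (k + 1) - M e' k)
          (fun e' _ => by linarith [hMmono e' k]) heE
  -- summation
  have htot : ∑ k ∈ Finset.range n, (c * ‖x (k + 1) - x k‖)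
      ≤ ∑ k ∈ Finset.range n, ∑ e ∈ E, (M e (k + 1) - M e k) :=
    Finset.sum_le_sum fun k _ => hkey k
  rw [Finset.sum_comm] at htot
  have hsum_e : ∀ e ∈ E, ∑ k ∈ Finset.range n, (M e (k + 1) - M e k) ≤ D := by
    intro e heE
    rw [Finset.sum_range_sub (fun k => M e k)]
    have hM0 : M e 0 = ⟪x 0, e⟫ := by
      simp [hMdef]
    have hMn : M e n ≤ ⟪x 0, e⟫ + D := by
      simp only [hMdef]
      apply Finset.sup'_le
      intro i _
      have h1 : ⟪x i - x 0, e⟫ ≤ ‖x i - x 0‖ * ‖e‖ := real_inner_le_norm _ _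
      rw [hEunit e heE, mul_one] at h1
      have h2 : ⟪x i - x 0, e⟫ = ⟪x i, e⟫ - ⟪x 0, e⟫ := by rw [inner_sub_left]
      linarith [hxD i]
    linarith
  have hfinal : ∑ e ∈ E, ∑ k ∈ Finset.range n, (M e (k + 1) - M e k) ≤ E.card * D := by
    calc ∑ e ∈ E, ∑ k ∈ Finset.range n, (M e (k + 1) - M e k)
        ≤ ∑ _e ∈ E, D := Finset.sum_le_sum hsum_e
      _ = E.card * D := by rw [Finset.sum_const, nsmul_eq_mul]
  calc (Real.sqrt ((1 - d * lam) / (d + 1)) / 2 * ((1 - lam) / 2))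
        * ∑ k ∈ Finset.range n, ‖x (k + 1) - x k‖
      = ∑ k ∈ Finset.range n, (c * ‖x (k + 1) - x k‖) := by
        rw [Finset.mul_sum]
    _ ≤ E.card * D := le_trans htot hfinal


/-- **rectifiability.** Every continuous `λ`-curve in `ℝ^d` (`d ≥ 1`,
`λ ∈ [−1, 1/d)`) with bounded image has finite length. -/
theorem lambda_curve_finite_length (d : ℕ) (hd : 1 ≤ d) (lam : ℝ)
    (hlam₁ : -1 ≤ lam) (hlam₂ : lam < 1 / (d : ℝ))
    (I : Set ℝ) (hI : I.OrdConnected)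
    (γ : ℝ → EuclideanSpace ℝ (Fin d))
    (hcont : ContinuousOn γ I)
    (hbdd : Bornology.IsBounded (γ '' I))
    (hγ : ∀ t₁ ∈ I, ∀ t₂ ∈ I, ∀ t₃ ∈ I, t₁ ≤ t₂ → t₂ ≤ t₃ →
      ‖γ t₁ - γ t₂‖ ≤ ‖γ t₁ - γ t₃‖ + lam * ‖γ t₂ - γ t₃‖) :
    eVariationOn γ I < ⊤ := by
  classical
  have hdpos : (0 : ℝ) < (d : ℝ) := by exact_mod_cast hd
  have hlamd : (d : ℝ) * lam < 1 := by
    have := (lt_div_iff₀ hdpos).mp hlam₂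
    linarith
  have hlam1 : lam < 1 := by
    have h1 : 1 / (d : ℝ) ≤ 1 := by
      rw [div_le_one hdpos]; exact_mod_cast hd
    linarith
  set ε : ℝ := Real.sqrt ((1 - d * lam) / (d + 1)) with hεdef
  have hεpos : 0 < ε := Real.sqrt_pos.mpr (div_pos (by linarith) (by positivity))
  obtain ⟨E, hEunit, hEnet⟩ := net_exists d (ε / 2) (by positivity)
  obtain ⟨D0, hD0⟩ := Metric.isBounded_iff.mp hbdd
  set D : ℝ := max D0 0 with hDdef
  set c : ℝ := ε / 2 * ((1 - lam) / 2) with hcdef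
  have hcpos : 0 < c := by
    rw [hcdef]
    apply mul_pos (by positivity) (by linarith)
  have hbound : eVariationOn γ I ≤ ENNReal.ofReal ((E.card : ℝ) * D / c) := by
    apply iSup_le
    rintro ⟨n, u, hu, us⟩
    have heq : ∑ i ∈ Finset.range n, edist (γ (u (i + 1))) (γ (u i))
        = ENNReal.ofReal (∑ i ∈ Finset.range n, ‖γ (u (i + 1)) - γ (u i)‖) := by
      rw [ENNReal.ofReal_sum_of_nonneg (fun i _ => norm_nonneg _)]
      refine Finset.sum_congr rfl fun i _ => ?_
      rw [edist_dist, dist_eq_norm]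
    rw [heq]
    apply ENNReal.ofReal_le_ofReal
    have hcore := core_sum_bound d lam hlam₁ hlamd hlam1 E hEunit hEnet D n
      (fun i => γ (u i))
      (fun i j k hij hjk => hγ (u i) (us i) (u j) (us j) (u k) (us k) (hu hij) (hu hjk))
      (fun i => by
        have h1 : dist (γ (u i)) (γ (u 0)) ≤ D0 :=
          hD0 (Set.mem_image_of_mem γ (us i)) (Set.mem_image_of_mem γ (us 0))
        rw [dist_eq_norm] at h1
        exact le_trans h1 (le_max_left _ _))
    rw [le_div_iff₀ hcpos]
    calc (∑ i ∈ Finset.range n, ‖γ (u (i + 1)) - γ (u i)‖) * c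
        = c * ∑ i ∈ Finset.range n, ‖γ (u (i + 1)) - γ (u i)‖ := by ring
      _ ≤ (E.card : ℝ) * D := hcore
  exact lt_of_le_of_lt hbound ENNReal.ofReal_lt_top
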